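/- Let F be the free group on two generators x and y, and let w(s,t) be a freely reduced word in letters s, t. Then w(x, xy) · w(y, xy) = 1 in F if and only if w(s,t) is the trivial word. Equivalently: if f : F⟨s,t⟩ → F⟨x,y⟩ is the homomorphism sending s ↦ x, t ↦ xy, and g : F⟨s,t⟩ → F⟨x,y⟩ is the homomorphism sending s ↦ y, t ↦ xy, then for any element w of F⟨s,t⟩, f(w) · g(w) = 1 implies w = 1. -/

import Mathlib

set_option linter.unnecessarySimpa false

namespace Stmt1Aux

open FreeGroup List

abbrev F := FreeGroup ℕ

/-- Non-cancellation relation between adjacent letters. -/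
def P (p q : ℕ × Bool) : Prop := ¬(p.1 = q.1 ∧ p.2 = !q.2)

lemma chain'_reduce (L : List (ℕ × Bool)) : List.IsChain P (FreeGroup.reduce L) := by
  induction L with
  | nil => simp
  | cons x L ih =>
    rw [FreeGroup.reduce.cons]
    cases hE : FreeGroup.reduce L with
    | nil => simp
    | cons hd tl =>
      rw [hE] at ih
      by_cases hc : x.1 = hd.1 ∧ x.2 = !hd.2
      · simpa [hc] using ih.tail
      · simp only [if_neg hc]
        exact List.isChain_cons_cons.mpr ⟨hc, ih⟩

lemma reduce_eq_self_of_chain' : ∀ {L : List (ℕ × Bool)}, List.IsChain P L →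
    FreeGroup.reduce L = L := by
  intro L h
  induction L with
  | nil => rfl
  | cons x L ih =>
    have hL : FreeGroup.reduce L = L := ih h.tail
    rw [FreeGroup.reduce.cons, hL]
    cases L with
    | nil => rfl
    | cons hd tl =>
      have hp : P x hd := (List.isChain_cons_cons.mp h).1
      simp only [if_neg hp]

lemma chain'_toWord (v : F) : List.IsChain P v.toWord := by
  rw [← FreeGroup.reduce_toWord]; exact chain'_reduce _

/-- periodicity lemma for lists -/
lemma period {α : Type*} (a b : α) (hab : a ≠ b) :
    ∀ (n : ℕ) (L : List α), L.length ≤ n → a :: b :: L = L ++ [a, b] →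
      ∃ k : ℕ, L = (List.replicate k [a, b]).flatten := by
  intro n
  induction n with
  | zero =>
    intro L hL _
    have : L = [] := List.length_eq_zero_iff.mp (Nat.le_zero.mp hL)
    exact ⟨0, by simp [this]⟩
  | succ n ih =>
    intro L hL h
    match L with
    | [] => exact ⟨0, rfl⟩
    | [c] =>
      exfalso
      simp only [List.cons.injEq, List.singleton_append] at h
      obtain ⟨h1, h2, _⟩ := h
      exact hab (h1 ▸ h2.symm)
    | c :: d :: M =>
      simp only [List.cons_append, List.cons.injEq] at h
      obtain ⟨h1, h2, h3⟩ := h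
      subst h1; subst h2
      have hM : M.length ≤ n := by
        simp only [List.length_cons] at hL; omega
      obtain ⟨k, hk⟩ := ih M hM h3
      exact ⟨k + 1, by simp [List.replicate_succ, hk]⟩

def yx : F := FreeGroup.of 1 * FreeGroup.of 0

lemma yx_eq_mk : yx = FreeGroup.mk [((1 : ℕ), true), ((0 : ℕ), true)] := rfl

lemma toWord_mul_yx (v : F) (h2 : v.toWord.getLast? ≠ some ((1 : ℕ), false)) :
    (v * yx).toWord = v.toWord ++ [((1 : ℕ), true), ((0 : ℕ), true)] := by
  conv_lhs => rw [← FreeGroup.mk_toWord (x := v), yx_eq_mk, FreeGroup.mul_mk, FreeGroup.toWord_mk]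
  apply reduce_eq_self_of_chain'
  rw [List.isChain_append]
  refine ⟨chain'_toWord v, by simp [P], ?_⟩
  intro x hx y hy
  simp only [List.head?_cons, Option.mem_def, Option.some.injEq] at hy
  subst hy
  intro ⟨hx1, hx2⟩
  apply h2
  rw [Option.mem_def] at hx
  have hx' : x = ((1 : ℕ), false) := Prod.ext hx1 (by simpa using hx2)
  rw [hx, hx']

lemma toWord_yx_mul (v : F) (h1 : v.toWord.head? ≠ some ((0 : ℕ), false)) :
    (yx * v).toWord = ((1 : ℕ), true) :: ((0 : ℕ), true) :: v.toWord := by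
  conv_lhs => rw [← FreeGroup.mk_toWord (x := v), yx_eq_mk, FreeGroup.mul_mk, FreeGroup.toWord_mk]
  apply reduce_eq_self_of_chain'
  refine List.isChain_cons_cons.mpr ⟨by simp [P], List.isChain_cons.mpr ⟨?_, chain'_toWord v⟩⟩
  intro y hy
  intro ⟨hy1, hy2⟩
  apply h1
  simp only [Option.mem_def] at hy
  have hy' : y = ((0 : ℕ), false) := Prod.ext hy1.symm (by simpa using hy2)
  exact hy' ▸ hy

lemma case1 (v : F) (hcomm : v * yx = yx * v)
    (h1 : v.toWord.head? ≠ some ((0 : ℕ), false))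
    (h2 : v.toWord.getLast? ≠ some ((1 : ℕ), false)) :
    ∃ k : ℕ, v = yx ^ k := by
  have heq : ((1 : ℕ), true) :: ((0 : ℕ), true) :: v.toWord
      = v.toWord ++ [((1 : ℕ), true), ((0 : ℕ), true)] := by
    rw [← toWord_yx_mul v h1, ← toWord_mul_yx v h2, hcomm]
  obtain ⟨k, hk⟩ := period _ _ (by decide) v.toWord.length v.toWord le_rfl heq
  refine ⟨k, ?_⟩
  rw [← FreeGroup.mk_toWord (x := v), hk, yx_eq_mk, FreeGroup.pow_mk]

lemma norm_toWord (z : F) : z.norm = z.toWord.length := rfl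

lemma comm_yx (v : F) (hcomm : v * yx = yx * v) : ∃ n : ℤ, v = yx ^ n := by
  by_cases h1 : v.toWord.head? = some ((0 : ℕ), false) <;>
    by_cases h2 : v.toWord.getLast? = some ((1 : ℕ), false)
  · -- both: apply case1 to v⁻¹
    have hcomm' : v⁻¹ * yx = yx * v⁻¹ := (Commute.inv_left hcomm : Commute v⁻¹ yx)
    have hw : v⁻¹.toWord = (v.toWord.map (fun g => (g.1, !g.2))).reverse := by
      rw [FreeGroup.toWord_inv]; rfl
    have k1 : v⁻¹.toWord.head? ≠ some ((0 : ℕ), false) := by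
      rw [hw, List.head?_reverse, List.getLast?_map, h2]; decide
    have k2 : v⁻¹.toWord.getLast? ≠ some ((1 : ℕ), false) := by
      rw [hw, List.getLast?_reverse, List.head?_map, h1]; decide
    obtain ⟨k, hk⟩ := case1 v⁻¹ hcomm' k1 k2
    exact ⟨-(k : ℤ), by rw [zpow_neg, zpow_natCast, ← hk, inv_inv]⟩
  · -- head = x⁻¹, last ≠ y⁻¹ : contradiction
    exfalso
    obtain ⟨L', hL⟩ : ∃ L', v.toWord = ((0 : ℕ), false) :: L' := by
      cases hE : v.toWord with
      | nil => rw [hE] at h1; simp at h1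
      | cons x L' =>
        rw [hE] at h1
        simp only [List.head?_cons, Option.some.injEq] at h1
        exact ⟨L', by rw [h1]⟩
    have hv : v = (FreeGroup.of 0)⁻¹ * FreeGroup.mk L' := by
      rw [← FreeGroup.mk_toWord (x := v), hL]
      rfl
    have hle : (yx * v).norm ≤ L'.length + 1 := by
      have : yx * v = FreeGroup.of 1 * FreeGroup.mk L' := by
        rw [hv, yx]; group
      rw [this]
      calc (FreeGroup.of 1 * FreeGroup.mk L').norm
          ≤ (FreeGroup.of (1 : ℕ)).norm + (FreeGroup.mk L').norm :=
            FreeGroup.norm_mul_le _ _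
        _ ≤ 1 + L'.length := by
            rw [FreeGroup.norm_of]
            exact Nat.add_le_add_left FreeGroup.norm_mk_le 1
        _ = L'.length + 1 := by omega
    have hbig : (v * yx).norm = L'.length + 3 := by
      rw [norm_toWord, toWord_mul_yx v h2, List.length_append, hL]
      simp
    rw [hcomm] at hbig
    omega
  · -- head ≠ x⁻¹, last = y⁻¹ : contradiction
    exfalso
    obtain ⟨L', hL⟩ : ∃ L', v.toWord = L' ++ [((1 : ℕ), false)] := by
      have hne : v.toWord ≠ [] := by
        intro hE; rw [hE] at h2; simp at h2
      refine ⟨v.toWord.dropLast, ?_⟩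
      have hthis := List.dropLast_append_getLast hne
      rw [List.getLast?_eq_getLast_of_ne_nil hne, Option.some.injEq] at h2
      rw [h2] at hthis
      exact hthis.symm
    have hv : v = FreeGroup.mk L' * (FreeGroup.of 1)⁻¹ := by
      rw [← FreeGroup.mk_toWord (x := v), hL]
      have : ((FreeGroup.of 1 : F))⁻¹ = FreeGroup.mk [((1 : ℕ), false)] := rfl
      rw [this, FreeGroup.mul_mk]
    have hle : (v * yx).norm ≤ L'.length + 1 := by
      have : v * yx = FreeGroup.mk L' * FreeGroup.of 0 := by
        rw [hv, yx]; group
      rw [this]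
      calc (FreeGroup.mk L' * FreeGroup.of 0).norm
          ≤ (FreeGroup.mk L').norm + (FreeGroup.of (0 : ℕ)).norm :=
            FreeGroup.norm_mul_le _ _
        _ ≤ L'.length + 1 := by
            rw [FreeGroup.norm_of]
            exact Nat.add_le_add_right FreeGroup.norm_mk_le 1
    have hbig : (yx * v).norm = L'.length + 3 := by
      rw [norm_toWord, toWord_yx_mul v h1, hL]
      simp
    rw [← hcomm] at hbig
    omega
  · obtain ⟨k, hk⟩ := case1 v hcomm h1 h2
    exact ⟨(k : ℤ), by rw [zpow_natCast, hk]⟩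

def swapGen : ℕ → F := fun n => FreeGroup.of (if n = 0 then 1 else if n = 1 then 0 else n)

def sg : F →* F := FreeGroup.lift swapGen

lemma sg_of (n : ℕ) : sg (FreeGroup.of n) = swapGen n := FreeGroup.lift_apply_of

lemma sg_of0 : sg (FreeGroup.of 0) = FreeGroup.of 1 := by rw [sg_of]; rfl

lemma sg_of1 : sg (FreeGroup.of 1) = FreeGroup.of 0 := by rw [sg_of]; rfl

lemma sg_sg (z : F) : sg (sg z) = z := by
  have hcomp : sg.comp sg = MonoidHom.id F := by
    apply FreeGroup.ext_hom
    intro n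
    by_cases h0 : n = 0
    · subst h0; simp [sg_of, swapGen, MonoidHom.comp_apply]
    · by_cases h1 : n = 1
      · subst h1; simp [sg_of, swapGen, MonoidHom.comp_apply]
      · simp [sg_of, swapGen, h0, h1, MonoidHom.comp_apply]
  calc sg (sg z) = (sg.comp sg) z := rfl
    _ = z := by rw [hcomp]; rfl

lemma conj_zpow' (a b : F) (n : ℤ) : a * b ^ n * a⁻¹ = (a * b * a⁻¹) ^ n := by
  have := map_zpow (MulAut.conj a).toMonoidHom b n
  simpa [MulAut.conj_apply] using this.symm

lemma core (u : F) (hsv : sg ((FreeGroup.of 0)⁻¹ * u * FreeGroup.of 0) = u⁻¹) : u = 1 := by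
  set v : F := (FreeGroup.of 0)⁻¹ * u * FreeGroup.of 0 with hv
  have hu : u = FreeGroup.of 0 * v * (FreeGroup.of 0)⁻¹ := by rw [hv]; group
  have A : sg v = FreeGroup.of 0 * v⁻¹ * (FreeGroup.of 0)⁻¹ := by
    rw [hsv, hu]; group
  have B : v = FreeGroup.of 1 * (FreeGroup.of 0 * v⁻¹ * (FreeGroup.of 0)⁻¹)⁻¹
      * (FreeGroup.of 1)⁻¹ := by
    conv_lhs => rw [← sg_sg v, A]
    simp only [_root_.map_mul, _root_.map_inv, sg_of0, A]
  have hcomm : v * yx = yx * v := by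
    calc v * yx = (FreeGroup.of 1 * (FreeGroup.of 0 * v⁻¹ * (FreeGroup.of 0)⁻¹)⁻¹
        * (FreeGroup.of 1)⁻¹) * yx := by rw [← B]
      _ = yx * v := by rw [yx]; group
  obtain ⟨n, hn⟩ := comm_yx v hcomm
  have hconj : (FreeGroup.of 0 : F) * yx * (FreeGroup.of 0)⁻¹
      = FreeGroup.of 0 * FreeGroup.of 1 := by
    rw [yx]; group
  have hun : u = (FreeGroup.of 0 * FreeGroup.of 1) ^ n := by
    rw [hu, hn, conj_zpow', hconj]
  have hsgyx : sg yx = FreeGroup.of 0 * FreeGroup.of 1 := by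
    rw [yx, _root_.map_mul, sg_of0, sg_of1]
  have hinv : ((FreeGroup.of 0 * FreeGroup.of 1 : F)) ^ n
      = (((FreeGroup.of 0 * FreeGroup.of 1 : F)) ^ n)⁻¹ := by
    have h1 : sg v = ((FreeGroup.of 0 * FreeGroup.of 1 : F)) ^ n := by
      rw [hn, _root_.map_zpow, hsgyx]
    conv_lhs => rw [← h1, hsv, hun]
  have h2n : ((FreeGroup.of 0 * FreeGroup.of 1 : F)) ^ (2 * n) = 1 := by
    have h' := mul_eq_one_iff_eq_inv.mpr hinv
    rw [← zpow_add] at h'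
    rw [two_mul]; exact h'
  have hn0 : n = 0 := by
    set φ : F →* Multiplicative ℤ :=
      FreeGroup.lift (fun _ => Multiplicative.ofAdd 1) with hφ
    have hφ2 := congrArg φ h2n
    rw [_root_.map_zpow, _root_.map_one, _root_.map_mul] at hφ2
    simp only [hφ, FreeGroup.lift_apply_of] at hφ2
    have h4 := congrArg Multiplicative.toAdd hφ2
    simp only [toAdd_zpow, toAdd_mul, toAdd_ofAdd, toAdd_one, smul_eq_mul] at h4
    omega
  rw [hun, hn0, zpow_zero]

abbrev F2 := FreeGroup (Fin 2)

def fh : F2 →* F := FreeGroup.lift ![FreeGroup.of 0, FreeGroup.of 0 * FreeGroup.of 1]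

def gh : F2 →* F := FreeGroup.lift ![FreeGroup.of 1, FreeGroup.of 0 * FreeGroup.of 1]

lemma gh_eq (z : F2) : gh z = sg ((FreeGroup.of 0)⁻¹ * fh z * FreeGroup.of 0) := by
  have hcomp : gh = sg.comp (((MulAut.conj ((FreeGroup.of 0 : F))⁻¹).toMonoidHom).comp fh) := by
    apply FreeGroup.ext_hom
    intro i
    fin_cases i <;>
      simp [fh, gh, FreeGroup.lift_apply_of, MulAut.conj_apply, mul_assoc, sg_of, swapGen]
  rw [hcomp]
  simp [MulAut.conj_apply, mul_assoc]

def rt : F →* F2 :=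
  FreeGroup.lift (fun n => if n = 0 then FreeGroup.of 0
    else if n = 1 then (FreeGroup.of 0)⁻¹ * FreeGroup.of 1 else 1)

lemma retract (z : F2) (hz : fh z = 1) : z = 1 := by
  have hrf : rt.comp fh = MonoidHom.id F2 := by
    apply FreeGroup.ext_hom
    intro i
    fin_cases i <;> simp [rt, fh, FreeGroup.lift_apply_of, MonoidHom.comp_apply]
  calc z = (rt.comp fh) z := by rw [hrf]; rfl
    _ = rt (fh z) := rfl
    _ = 1 := by rw [hz, _root_.map_one]

end Stmt1Aux

/-- In the free group on `x = of 0`, `y = of 1`, if `f` sends `s ↦ x, t ↦ xy`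
and `g` sends `s ↦ y, t ↦ xy`, then for any word `w`, `f w * g w = 1` iff `w = 1`. -/
theorem stmt1 (w : FreeGroup (Fin 2)) :
    (FreeGroup.lift ![FreeGroup.of 0, FreeGroup.of 0 * FreeGroup.of 1]) w *
      (FreeGroup.lift ![FreeGroup.of 1, FreeGroup.of 0 * FreeGroup.of 1]) w = 1 ↔
    w = 1 := by
  constructor
  · intro h
    have h' : Stmt1Aux.fh w * Stmt1Aux.gh w = 1 := h
    have hsv : Stmt1Aux.sg ((FreeGroup.of 0)⁻¹ * Stmt1Aux.fh w * FreeGroup.of 0)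
        = (Stmt1Aux.fh w)⁻¹ := by
      rw [← Stmt1Aux.gh_eq]
      exact (mul_eq_one_iff_inv_eq.mp h').symm
    exact Stmt1Aux.retract w (Stmt1Aux.core _ hsv)
  · rintro rfl; simp
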